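/- Let S₁, ..., S_c be pairwise disjoint closed subsets of the unit sphere S^{n-1} in R^n, each of which is Lipschitz normally embedded, and let δ > 0 be a lower bound on the pairwise Euclidean distances dist(S_i, S_j) for i ≠ j. Then the union of the non-negative cones over the S_i (with vertex the origin) is Lipschitz normally embedded. -/

import Mathlib

open scoped ENNReal NNReal
open Set

noncomputable def pathLength {E : Type*} [PseudoEMetricSpace E] (γ : ℝ → E) : ℝ≥0∞ :=
  eVariationOn γ (Set.Icc 0 1)

noncomputable def innerDist {E : Type*} [PseudoEMetricSpace E] (S : Set E) (x y : E) : ℝ≥0∞ :=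
  ⨅ (γ : ℝ → E) (_ : ContinuousOn γ (Set.Icc 0 1)) (_ : γ 0 = x) (_ : γ 1 = y)
    (_ : γ '' Set.Icc 0 1 ⊆ S), pathLength γ

section helpers
variable {E : Type*} [PseudoEMetricSpace E]

lemma innerDist_le {S : Set E} {x y : E} (γ : ℝ → E) (hc : ContinuousOn γ (Set.Icc 0 1))
    (h0 : γ 0 = x) (h1 : γ 1 = y) (him : γ '' Set.Icc 0 1 ⊆ S) :
    innerDist S x y ≤ pathLength γ :=
  iInf_le_of_le γ (iInf_le_of_le hc (iInf_le_of_le h0 (iInf_le_of_le h1 (iInf_le _ him))))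

lemma innerDist_mono {S T : Set E} (h : S ⊆ T) (x y : E) :
    innerDist T x y ≤ innerDist S x y := by
  refine le_iInf fun γ => le_iInf fun hc => le_iInf fun h0 => le_iInf fun h1 =>
    le_iInf fun him => ?_
  exact innerDist_le γ hc h0 h1 (him.trans h)

lemma innerDist_self {S : Set E} {x : E} (hx : x ∈ S) : innerDist S x x ≤ 0 := by
  have h1 := innerDist_le (S := S) (fun _ => x) continuousOn_const rfl rfl
    (by rintro _ ⟨r, -, rfl⟩; exact hx)
  have h2 : pathLength (fun _ : ℝ => x) = 0 :=
    eVariationOn.constant_on (by simp [Set.Subsingleton])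
  exact h1.trans_eq h2

lemma exists_path_of_lt {S : Set E} {x y : E} {d : ℝ≥0∞} (h : innerDist S x y < d) :
    ∃ γ : ℝ → E, ContinuousOn γ (Set.Icc 0 1) ∧ γ 0 = x ∧ γ 1 = y ∧
      γ '' Set.Icc 0 1 ⊆ S ∧ pathLength γ < d := by
  simp only [innerDist, iInf_lt_iff] at h
  obtain ⟨γ, hc, h0, h1, him, hlen⟩ := h
  exact ⟨γ, hc, h0, h1, him, hlen⟩

lemma innerDist_symm_le {S : Set E} (x y : E) : innerDist S x y ≤ innerDist S y x := by
  refine le_iInf fun γ => le_iInf fun hc => le_iInf fun h0 => le_iInf fun h1 =>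
    le_iInf fun him => ?_
  set φ : ℝ → ℝ := fun r => 1 - r with hφ
  have hφim : φ '' Set.Icc 0 1 = Set.Icc 0 1 := by
    ext z
    constructor
    · rintro ⟨r, hr, rfl⟩; exact ⟨by simp [hφ]; linarith [hr.2], by simp [hφ]; linarith [hr.1]⟩
    · rintro ⟨hz0, hz1⟩; exact ⟨1 - z, ⟨by linarith, by linarith⟩, by simp [hφ]⟩
  have hanti : AntitoneOn φ (Set.Icc 0 1) := fun a _ b _ hab => by simp [hφ]; linarith
  have hcomp : eVariationOn (γ ∘ φ) (Set.Icc 0 1) = eVariationOn γ (Set.Icc 0 1) := by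
    rw [eVariationOn.comp_eq_of_antitoneOn γ φ hanti, hφim]
  refine (innerDist_le (γ ∘ φ) ?_ ?_ ?_ ?_).trans_eq hcomp
  · refine hc.comp (by fun_prop) ?_
    intro r hr; rw [← hφim]; exact ⟨r, hr, rfl⟩
  · simp [hφ, h1]
  · simp [hφ, h0]
  · rw [Set.image_comp, hφim]; exact him

end helpers

section concat
variable {E : Type*} [PseudoEMetricSpace E]

lemma image_two_mul_Icc : (fun r : ℝ => 2 * r) '' Set.Icc 0 (1/2) = Set.Icc 0 1 := by
  ext z
  simp only [Set.mem_image, Set.mem_Icc]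
  constructor
  · rintro ⟨r, hr, rfl⟩; constructor <;> linarith [hr.1, hr.2]
  · rintro ⟨hz0, hz1⟩; exact ⟨z / 2, ⟨by linarith, by linarith⟩, by ring⟩

lemma image_two_mul_sub_Icc : (fun r : ℝ => 2 * r - 1) '' Set.Icc (1/2) 1 = Set.Icc 0 1 := by
  ext z
  simp only [Set.mem_image, Set.mem_Icc]
  constructor
  · rintro ⟨r, hr, rfl⟩; constructor <;> linarith [hr.1, hr.2]
  · rintro ⟨hz0, hz1⟩; exact ⟨(z + 1) / 2, ⟨by linarith, by linarith⟩, by ring⟩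

lemma innerDist_le_concat {S : Set E} {γ₁ γ₂ : ℝ → E}
    (hc1 : ContinuousOn γ₁ (Set.Icc 0 1)) (hc2 : ContinuousOn γ₂ (Set.Icc 0 1))
    (hmid : γ₁ 1 = γ₂ 0) (him1 : γ₁ '' Set.Icc 0 1 ⊆ S) (him2 : γ₂ '' Set.Icc 0 1 ⊆ S) :
    innerDist S (γ₁ 0) (γ₂ 1) ≤ pathLength γ₁ + pathLength γ₂ := by
  set c1 : ℝ → ℝ := fun r => min 1 (max 0 (2 * r)) with hc1def
  set c2 : ℝ → ℝ := fun r => min 1 (max 0 (2 * r - 1)) with hc2def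
  have hcmem : ∀ r, c1 r ∈ Set.Icc (0:ℝ) 1 ∧ c2 r ∈ Set.Icc (0:ℝ) 1 := by
    intro r
    constructor <;> exact ⟨le_min one_pos.le (le_max_left _ _), min_le_left _ _⟩
  have e10 : c1 0 = 0 := by norm_num [hc1def]
  have e11 : c1 (1/2) = 1 := by norm_num [hc1def]
  have e20 : c2 (1/2) = 0 := by norm_num [hc2def]
  have e21 : c2 1 = 1 := by norm_num [hc2def]
  set f : ℝ → E := fun r => γ₁ (c1 r) with hf
  set g : ℝ → E := fun r => γ₂ (c2 r) with hg
  have hfc : Continuous f := hc1.comp_continuous (by fun_prop) fun r => (hcmem r).1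
  have hgc : Continuous g := hc2.comp_continuous (by fun_prop) fun r => (hcmem r).2
  set γ : ℝ → E := fun r => if r ≤ 1/2 then f r else g r with hγdef
  have hhalf : ∀ r : ℝ, r = 1/2 → f r = g r := by
    intro r hr
    subst hr
    show γ₁ (c1 (1/2)) = γ₂ (c2 (1/2))
    rw [e11, e20, hmid]
  have hγc : Continuous γ := Continuous.if_le hfc hgc continuous_id continuous_const hhalf
  have hγ0 : γ 0 = γ₁ 0 := by
    have h0 : (0:ℝ) ≤ 1/2 := by norm_num
    simp only [hγdef, if_pos h0]
    show γ₁ (c1 0) = γ₁ 0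
    rw [e10]
  have hγ1 : γ 1 = γ₂ 1 := by
    have h1 : ¬ ((1:ℝ) ≤ 1/2) := by norm_num
    simp only [hγdef, if_neg h1]
    show γ₂ (c2 1) = γ₂ 1
    rw [e21]
  have hγim : γ '' Set.Icc 0 1 ⊆ S := by
    rintro _ ⟨r, -, rfl⟩
    by_cases h : r ≤ 1/2
    · simp only [hγdef, if_pos h]
      exact him1 ⟨c1 r, (hcmem r).1, rfl⟩
    · simp only [hγdef, if_neg h]
      exact him2 ⟨c2 r, (hcmem r).2, rfl⟩
  have eq1 : Set.EqOn γ (γ₁ ∘ fun r => 2 * r) (Set.Icc 0 (1/2)) := by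
    intro r hr
    have hle : r ≤ 1/2 := hr.2
    have hcr : c1 r = 2 * r := by
      simp only [hc1def]
      rw [max_eq_right (by linarith [hr.1]), min_eq_right (by linarith)]
    simp only [hγdef, if_pos hle, Function.comp]
    show γ₁ (c1 r) = γ₁ (2 * r)
    rw [hcr]
  have eq2 : Set.EqOn γ (γ₂ ∘ fun r => 2 * r - 1) (Set.Icc (1/2) 1) := by
    intro r hr
    by_cases hle : r ≤ 1/2
    · have hr2 : r = 1/2 := le_antisymm hle hr.1
      subst hr2
      simp only [hγdef, if_pos hle, Function.comp]
      rw [hhalf _ rfl]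
      show γ₂ (c2 (1/2)) = γ₂ (2 * (1/2) - 1)
      rw [e20]; norm_num
    · have hcr : c2 r = 2 * r - 1 := by
        simp only [hc2def]
        rw [max_eq_right (by linarith [not_le.mp hle]), min_eq_right (by linarith [hr.2])]
      simp only [hγdef, if_neg hle, Function.comp]
      show γ₂ (c2 r) = γ₂ (2 * r - 1)
      rw [hcr]
  have var1 : eVariationOn γ (Set.Icc 0 (1/2)) = pathLength γ₁ := by
    rw [eVariationOn.eq_of_eqOn eq1, eVariationOn.comp_eq_of_monotoneOn γ₁ _
      (fun a _ b _ hab => by show 2 * a ≤ 2 * b; linarith), image_two_mul_Icc]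
    rfl
  have var2 : eVariationOn γ (Set.Icc (1/2) 1) = pathLength γ₂ := by
    rw [eVariationOn.eq_of_eqOn eq2, eVariationOn.comp_eq_of_monotoneOn γ₂ _
      (fun a _ b _ hab => by show 2 * a - 1 ≤ 2 * b - 1; linarith), image_two_mul_sub_Icc]
    rfl
  have hsplit : pathLength γ = pathLength γ₁ + pathLength γ₂ := by
    have h := eVariationOn.Icc_add_Icc γ (s := Set.univ) (a := (0:ℝ)) (b := 1/2) (c := 1)
      (by norm_num) (by norm_num) (Set.mem_univ _)
    simp only [Set.univ_inter] at h
    rw [pathLength, ← h, var1, var2]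
  rw [← hγ0, ← hγ1, ← hsplit]
  exact innerDist_le γ hγc.continuousOn rfl rfl hγim

lemma innerDist_triangle {S : Set E} (x y z : E) :
    innerDist S x z ≤ innerDist S x y + innerDist S y z := by
  by_cases h1 : innerDist S x y = ⊤
  · simp [h1]
  by_cases h2 : innerDist S y z = ⊤
  · simp [h2]
  apply ENNReal.le_of_forall_pos_le_add
  intro ε hε _
  have hhalfpos : (0:ℝ≥0) < ε / 2 := half_pos hε
  have hε2 : ((ε/2 : ℝ≥0) : ℝ≥0∞) ≠ 0 := by
    exact_mod_cast hhalfpos.ne'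
  obtain ⟨γ₁, hc1, h10, h11, him1, hl1⟩ :=
    exists_path_of_lt (ENNReal.lt_add_right h1 hε2)
  obtain ⟨γ₂, hc2, h20, h21, him2, hl2⟩ :=
    exists_path_of_lt (ENNReal.lt_add_right h2 hε2)
  have := innerDist_le_concat hc1 hc2 (by rw [h11, h20]) him1 him2
  rw [h10, h21] at this
  calc innerDist S x z ≤ pathLength γ₁ + pathLength γ₂ := this
    _ ≤ (innerDist S x y + (ε/2 : ℝ≥0)) + (innerDist S y z + (ε/2 : ℝ≥0)) :=
        add_le_add hl1.le hl2.le
    _ = innerDist S x y + innerDist S y z + ε := by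
        rw [add_add_add_comm, ← ENNReal.coe_add, add_halves]

end concat

section normed
variable {F : Type*} [NormedAddCommGroup F] [NormedSpace ℝ F]

lemma eVariationOn_id_Icc01 : eVariationOn (id : ℝ → ℝ) (Set.Icc 0 1) ≤ ENNReal.ofReal 1 := by
  have hm : MonotoneOn (id : ℝ → ℝ) (Set.Icc 0 1) := fun a _ b _ hab => hab
  have := hm.eVariationOn_le (a := 0) (b := 1) (by simp) (by simp)
  simpa using this

lemma pathLength_segment_le (x y : F) :
    pathLength (fun r : ℝ => x + r • (y - x)) ≤ edist x y := by
  set γ : ℝ → F := fun r => x + r • (y - x) with hγ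
  have hlip : LipschitzWith ‖y - x‖₊ γ := by
    apply LipschitzWith.of_dist_le_mul
    intro a b
    have : γ a - γ b = (a - b) • (y - x) := by simp only [hγ]; module
    rw [dist_eq_norm, this, norm_smul]
    rw [Real.dist_eq]
    simp [mul_comm]
  have h1 : pathLength γ = eVariationOn (γ ∘ id) (Set.Icc 0 1) := rfl
  have h2 := (hlip.lipschitzOnWith (s := Set.univ)).comp_eVariationOn_le
    (g := (id : ℝ → ℝ)) (s := Set.Icc 0 1) (Set.mapsTo_univ _ _)
  rw [h1]
  refine h2.trans ?_
  calc (‖y - x‖₊ : ℝ≥0∞) * eVariationOn (id : ℝ → ℝ) (Set.Icc 0 1)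
      ≤ ‖y - x‖₊ * ENNReal.ofReal 1 := by
        exact mul_le_mul_right eVariationOn_id_Icc01 _
    _ = edist x y := by
        rw [ENNReal.ofReal_one, mul_one, edist_dist, dist_eq_norm, ← ENNReal.ofReal_coe_nnreal, coe_nnnorm,
          norm_sub_rev]

lemma innerDist_segment_le {S : Set F} {x y : F} (h : segment ℝ x y ⊆ S) :
    innerDist S x y ≤ edist x y := by
  set γ : ℝ → F := fun r => x + r • (y - x) with hγ
  have him : γ '' Set.Icc 0 1 ⊆ S := by
    rw [← segment_eq_image' ℝ x y]
    exact h
  refine (innerDist_le γ (by fun_prop) (by simp [hγ]) (by simp [hγ]) him).trans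
    (pathLength_segment_le x y)

lemma pathLength_const_smul_le (t : ℝ) (γ : ℝ → F) :
    pathLength (fun r => t • γ r) ≤ ENNReal.ofReal |t| * pathLength γ := by
  have hlip : LipschitzWith ‖t‖₊ (fun w : F => t • w) := by
    apply LipschitzWith.of_dist_le_mul
    intro a b
    rw [dist_smul₀]
    simp
  have h := (hlip.lipschitzOnWith (s := Set.univ)).comp_eVariationOn_le
    (g := γ) (s := Set.Icc 0 1) (Set.mapsTo_univ _ _)
  refine h.trans_eq ?_
  congr 1
  rw [← ENNReal.ofReal_coe_nnreal, coe_nnnorm, Real.norm_eq_abs]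

end normed

def IsLNEWith {E : Type*} [NormedAddCommGroup E] (L : ℝ) (S : Set E) : Prop :=
  ∀ x ∈ S, ∀ y ∈ S, innerDist S x y ≤ ENNReal.ofReal (L * dist x y)

def IsLNE {E : Type*} [NormedAddCommGroup E] (S : Set E) : Prop :=
  ∃ L > 0, IsLNEWith L S

def nonnegCone {n : ℕ} (S : Set (EuclideanSpace ℝ (Fin n))) : Set (EuclideanSpace ℝ (Fin n)) :=
  {x | ∃ t : ℝ, 0 ≤ t ∧ ∃ u ∈ S, x = t • u}

section cone
open scoped RealInnerProductSpace
variable {n : ℕ} {A : Set (EuclideanSpace ℝ (Fin n))}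

lemma smul_mem_cone {u : EuclideanSpace ℝ (Fin n)} (hu : u ∈ A) {t : ℝ} (ht : 0 ≤ t) :
    t • u ∈ nonnegCone A := ⟨t, ht, u, hu, rfl⟩

lemma zero_mem_cone {u : EuclideanSpace ℝ (Fin n)} (hu : u ∈ A) :
    (0 : EuclideanSpace ℝ (Fin n)) ∈ nonnegCone A := ⟨0, le_rfl, u, hu, (zero_smul ℝ u).symm⟩

lemma seg_subset_cone {v : EuclideanSpace ℝ (Fin n)} (hv : v ∈ A) {t s : ℝ}
    (ht : 0 ≤ t) (hts : t ≤ s) : segment ℝ (t • v) (s • v) ⊆ nonnegCone A := by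
  rw [segment_eq_image]
  rintro _ ⟨θ, hθ, rfl⟩
  refine ⟨(1 - θ) * t + θ * s, ?_, v, hv, ?_⟩
  · have h1 : 0 ≤ (1 - θ) * t := mul_nonneg (by linarith [hθ.2]) ht
    have h2 : 0 ≤ θ * s := mul_nonneg hθ.1 (ht.trans hts)
    linarith
  · show (1 - θ) • t • v + θ • s • v = ((1 - θ) * t + θ * s) • v
    rw [smul_smul, smul_smul, ← add_smul]

lemma innerDist_cone_smul {u v : EuclideanSpace ℝ (Fin n)}
    (hu : u ∈ A) (_hv : v ∈ A) {t D : ℝ} (ht : 0 ≤ t) (hD : 0 ≤ D)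
    (h : innerDist A u v ≤ ENNReal.ofReal D) :
    innerDist (nonnegCone A) (t • u) (t • v) ≤ ENNReal.ofReal (t * D) := by
  rcases eq_or_lt_of_le ht with h0 | htpos
  · rw [← h0]
    simp only [zero_smul]
    exact (innerDist_self (zero_mem_cone hu)).trans zero_le
  apply ENNReal.le_of_forall_pos_le_add
  intro ε hε _
  have hεR : (0:ℝ) < (ε:ℝ) := hε
  have hεt : (0:ℝ) < (ε:ℝ) / t := by positivity
  have hlt : innerDist A u v < ENNReal.ofReal D + ENNReal.ofReal ((ε:ℝ) / t) :=
    h.trans_lt (ENNReal.lt_add_right ENNReal.ofReal_ne_top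
      (by simp only [ne_eq, ENNReal.ofReal_eq_zero, not_le]; exact hεt))
  obtain ⟨γ, hc, h0', h1', him, hlen⟩ := exists_path_of_lt hlt
  have himc : (fun r => t • γ r) '' Set.Icc 0 1 ⊆ nonnegCone A := by
    rintro _ ⟨r, hr, rfl⟩
    exact smul_mem_cone (him ⟨r, hr, rfl⟩) ht
  have key := innerDist_le (S := nonnegCone A) (x := t • u) (y := t • v) (fun r => t • γ r)
    (hc.const_smul t) (by simp only [h0']) (by simp only [h1']) himc
  refine key.trans ?_
  calc pathLength (fun r => t • γ r)
      ≤ ENNReal.ofReal |t| * pathLength γ := pathLength_const_smul_le t γ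
    _ ≤ ENNReal.ofReal |t| * (ENNReal.ofReal D + ENNReal.ofReal ((ε:ℝ) / t)) :=
        mul_le_mul_right hlen.le _
    _ = ENNReal.ofReal (t * D) + ε := by
        rw [abs_of_nonneg ht, ← ENNReal.ofReal_add hD hεt.le, ← ENNReal.ofReal_mul ht,
          mul_add, mul_div_cancel₀ _ htpos.ne', ENNReal.ofReal_add (by positivity) hεR.le,
          ENNReal.ofReal_coe_nnreal]

lemma sq_le_sq_imp {a b : ℝ} (ha : 0 ≤ a) (hb : 0 ≤ b) (h : a^2 ≤ b^2) : a ≤ b := by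
  nlinarith

lemma dist_smul_sq {u v : EuclideanSpace ℝ (Fin n)} (hu : ‖u‖ = 1) (hv : ‖v‖ = 1)
    (t s : ℝ) : dist (t • u) (s • v) ^ 2 = t^2 + s^2 - 2*(t*s)*⟪u, v⟫ := by
  rw [dist_eq_norm, @norm_sub_sq_real]
  rw [norm_smul, norm_smul, real_inner_smul_left, real_inner_smul_right]
  simp only [Real.norm_eq_abs, hu, hv, mul_one]
  rw [sq_abs, sq_abs]
  ring

lemma dist_sphere_sq {u v : EuclideanSpace ℝ (Fin n)} (hu : ‖u‖ = 1) (hv : ‖v‖ = 1) :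
    dist u v ^ 2 = 2 - 2*⟪u, v⟫ := by
  have h := dist_smul_sq hu hv 1 1
  rw [one_smul, one_smul] at h
  rw [h]; ring

lemma claimA {u v : EuclideanSpace ℝ (Fin n)} (hu : ‖u‖ = 1) (hv : ‖v‖ = 1)
    {t s : ℝ} (ht : 0 ≤ t) (hts : t ≤ s) :
    s - t ≤ dist (t • u) (s • v) ∧ t * dist u v ≤ dist (t • u) (s • v) := by
  have hp : ⟪u, v⟫ ≤ 1 := by
    have := real_inner_le_norm u v
    rwa [hu, hv, mul_one] at this
  have hd2 := dist_smul_sq hu hv t s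
  have he2 := dist_sphere_sq hu hv
  have hd0 : 0 ≤ dist (t • u) (s • v) := dist_nonneg
  have he0 : 0 ≤ dist u v := dist_nonneg
  have hts0 : 0 ≤ t * s := mul_nonneg ht (ht.trans hts)
  constructor
  · refine sq_le_sq_imp (by linarith) hd0 ?_
    nlinarith [hts0, hp]
  · refine sq_le_sq_imp (mul_nonneg ht he0) hd0 ?_
    have h1 : t * dist u v ^ 2 * t ≤ t * dist u v ^ 2 * s := by
      have : 0 ≤ t * dist u v ^ 2 := mul_nonneg ht (sq_nonneg _)
      exact mul_le_mul_of_nonneg_left hts this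
    nlinarith [sq_nonneg (s - t)]

lemma claimB {u v : EuclideanSpace ℝ (Fin n)} (hu : ‖u‖ = 1) (hv : ‖v‖ = 1)
    {t s δ : ℝ} (ht : 0 ≤ t) (hs : 0 ≤ s) (hδ : 0 < δ) (hδuv : δ ≤ dist u v) :
    min 1 (δ/2) * (t + s) ≤ dist (t • u) (s • v) := by
  set k : ℝ := min 1 (δ/2) with hk
  have hk1 : k ≤ 1 := min_le_left _ _
  have hk2 : k ≤ δ/2 := min_le_right _ _
  have hkpos : 0 < k := lt_min one_pos (by linarith)
  have hd2 := dist_smul_sq hu hv t s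
  have he2 := dist_sphere_sq hu hv
  have hd0 : 0 ≤ dist (t • u) (s • v) := dist_nonneg
  have hts0 : 0 ≤ t * s := mul_nonneg ht hs
  have hδ2 : δ^2 ≤ 2 - 2*⟪u, v⟫ := by
    have := dist_sphere_sq hu hv
    nlinarith [dist_nonneg (x := u) (y := v)]
  refine sq_le_sq_imp (by positivity) hd0 ?_
  have h4k : 4 * k^2 ≤ δ^2 := by nlinarith
  have hk2le1 : k^2 ≤ 1 := by nlinarith
  have hA : k^2 * (t-s)^2 ≤ (t-s)^2 := by nlinarith [sq_nonneg (t-s)]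
  have hB : 4*k^2*(t*s) ≤ (2 - 2*⟪u, v⟫)*(t*s) :=
    mul_le_mul_of_nonneg_right (h4k.trans hδ2) hts0
  nlinarith [hA, hB]

end cone

lemma sameCone_bound {n : ℕ} {A : Set (EuclideanSpace ℝ (Fin n))} {L : ℝ}
    (hA : A ⊆ Metric.sphere (0 : EuclideanSpace ℝ (Fin n)) 1)
    (hL : 0 < L) (hLW : IsLNEWith L A)
    {t s : ℝ} {u v : EuclideanSpace ℝ (Fin n)} (ht : 0 ≤ t) (hts : t ≤ s)
    (hu : u ∈ A) (hv : v ∈ A) :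
    innerDist (nonnegCone A) (t • u) (s • v) ≤
      ENNReal.ofReal ((L + 1) * dist (t • u) (s • v)) := by
  have hun : ‖u‖ = 1 := mem_sphere_zero_iff_norm.mp (hA hu)
  have hvn : ‖v‖ = 1 := mem_sphere_zero_iff_norm.mp (hA hv)
  obtain ⟨hc1, hc2⟩ := claimA hun hvn ht hts
  have hd0 : 0 ≤ dist (t • u) (s • v) := dist_nonneg
  have tri := innerDist_triangle (S := nonnegCone A) (t • u) (t • v) (s • v)
  have b1 : innerDist (nonnegCone A) (t • u) (t • v) ≤
      ENNReal.ofReal (t * (L * dist u v)) :=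
    innerDist_cone_smul hu hv ht (mul_nonneg hL.le dist_nonneg) (hLW u hu v hv)
  have b2 : innerDist (nonnegCone A) (t • v) (s • v) ≤ ENNReal.ofReal (s - t) := by
    refine (innerDist_segment_le (seg_subset_cone hv ht hts)).trans_eq ?_
    rw [edist_dist]
    congr 1
    rw [dist_eq_norm, ← sub_smul, norm_smul, hvn, mul_one, Real.norm_eq_abs,
      abs_of_nonpos (by linarith), neg_sub]
  refine tri.trans ((add_le_add b1 b2).trans ?_)
  rw [← ENNReal.ofReal_add (by positivity) (by linarith)]
  apply ENNReal.ofReal_le_ofReal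
  nlinarith [mul_le_mul_of_nonneg_left hc2 hL.le]

theorem union_cones_LNE {n c : ℕ} (S : Fin c → Set (EuclideanSpace ℝ (Fin n)))
    (hsub : ∀ i, S i ⊆ Metric.sphere (0 : EuclideanSpace ℝ (Fin n)) 1)
    (hclosed : ∀ i, IsClosed (S i))
    (hdisj : Pairwise (Function.onFun Disjoint S))
    (hLNE : ∀ i, IsLNE (S i))
    (δ : ℝ) (hδ : 0 < δ)
    (hsep : ∀ i j, i ≠ j → ∀ x ∈ S i, ∀ y ∈ S j, δ ≤ dist x y) :
    IsLNE (⋃ i, nonnegCone (S i)) := by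
  classical
  choose L hLpos hLW using hLNE
  have hsum0 : (0:ℝ) ≤ ∑ i, L i := Finset.sum_nonneg fun i _ => (hLpos i).le
  set M : ℝ := 2 + ∑ i, L i with hM
  have hLleM : ∀ i, L i + 1 ≤ M := by
    intro i
    have h1 : L i ≤ ∑ j, L j :=
      Finset.single_le_sum (fun j _ => (hLpos j).le) (Finset.mem_univ i)
    rw [hM]; linarith
  have hMpos : 0 < M := by rw [hM]; linarith
  set k : ℝ := min 1 (δ/2) with hk
  have hkpos : 0 < k := lt_min one_pos (by linarith)
  set Λ : ℝ := max M (2/k) with hΛ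
  have hΛM : M ≤ Λ := le_max_left _ _
  have hΛk : 2/k ≤ Λ := le_max_right _ _
  have hΛpos : 0 < Λ := lt_of_lt_of_le hMpos hΛM
  refine ⟨Λ, hΛpos, ?_⟩
  intro x hx y hy
  obtain ⟨i, hxi⟩ := Set.mem_iUnion.mp hx
  obtain ⟨j, hyj⟩ := Set.mem_iUnion.mp hy
  obtain ⟨t, ht, u, hu, rfl⟩ := hxi
  obtain ⟨s, hs, v, hv, rfl⟩ := hyj
  have hun : ‖u‖ = 1 := mem_sphere_zero_iff_norm.mp (hsub i hu)
  have hvn : ‖v‖ = 1 := mem_sphere_zero_iff_norm.mp (hsub j hv)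
  have hd0 : (0:ℝ) ≤ dist (t • u) (s • v) := dist_nonneg
  set U := ⋃ i, nonnegCone (S i) with hU
  by_cases hij : i = j
  · subst hij
    have hmono : innerDist U (t • u) (s • v) ≤
        innerDist (nonnegCone (S i)) (t • u) (s • v) :=
      innerDist_mono (Set.subset_iUnion (fun i => nonnegCone (S i)) i) _ _
    by_cases hts : t ≤ s
    · refine (hmono.trans (sameCone_bound (hsub i) (hLpos i) (hLW i) ht hts hu hv)).trans ?_
      apply ENNReal.ofReal_le_ofReal
      exact mul_le_mul_of_nonneg_right ((hLleM i).trans hΛM) hd0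
    · have hst : s ≤ t := le_of_not_ge hts
      have hsymm : innerDist U (t • u) (s • v) ≤ innerDist U (s • v) (t • u) :=
        innerDist_symm_le _ _
      have hmono' : innerDist U (s • v) (t • u) ≤
          innerDist (nonnegCone (S i)) (s • v) (t • u) :=
        innerDist_mono (Set.subset_iUnion (fun i => nonnegCone (S i)) i) _ _
      refine (hsymm.trans (hmono'.trans
        (sameCone_bound (hsub i) (hLpos i) (hLW i) hs hst hv hu))).trans ?_
      apply ENNReal.ofReal_le_ofReal
      rw [dist_comm]
      exact mul_le_mul_of_nonneg_right ((hLleM i).trans hΛM) hd0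
  · -- different cones: go through the origin
    have key : k * (t + s) ≤ dist (t • u) (s • v) :=
      claimB hun hvn ht hs hδ (hsep i j hij u hu v hv)
    have hconei : nonnegCone (S i) ⊆ U := Set.subset_iUnion (fun i => nonnegCone (S i)) i
    have hconej : nonnegCone (S j) ⊆ U := Set.subset_iUnion (fun i => nonnegCone (S i)) j
    have bx : innerDist U (t • u) 0 ≤ ENNReal.ofReal t := by
      have hseg : segment ℝ (t • u) (0 : EuclideanSpace ℝ (Fin n)) ⊆ U := by
        have h0 := seg_subset_cone hu (le_refl (0:ℝ)) ht
        rw [zero_smul] at h0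
        rw [segment_symm]
        exact h0.trans hconei
      refine (innerDist_segment_le hseg).trans_eq ?_
      rw [edist_dist, dist_zero_right, norm_smul, hun, mul_one, Real.norm_eq_abs,
        abs_of_nonneg ht]
    have by' : innerDist U 0 (s • v) ≤ ENNReal.ofReal s := by
      have hseg : segment ℝ (0 : EuclideanSpace ℝ (Fin n)) (s • v) ⊆ U := by
        have h0 := seg_subset_cone hv (le_refl (0:ℝ)) hs
        rw [zero_smul] at h0
        exact h0.trans hconej
      refine (innerDist_segment_le hseg).trans_eq ?_
      rw [edist_dist, dist_comm, dist_zero_right, norm_smul, hvn, mul_one, Real.norm_eq_abs,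
        abs_of_nonneg hs]
    have tri := innerDist_triangle (S := U) (t • u) 0 (s • v)
    refine (tri.trans (add_le_add bx by')).trans ?_
    rw [← ENNReal.ofReal_add ht hs]
    apply ENNReal.ofReal_le_ofReal
    have h1 : (2/k) * (k*(t+s)) ≤ Λ * dist (t • u) (s • v) :=
      mul_le_mul hΛk key (by positivity) (le_trans (by positivity) hΛk)
    have h2 : (2/k)*(k*(t+s)) = 2*(t+s) := by field_simp
    linarith
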